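/- Let x₁, x₂, … be independent real random variables with E x_i = 0 for all i ∈ ℕ, and suppose there exist absolute constants C_x and b_x such that Pr{|x_i| > μ} ≤ C_x exp(−μ/b_x) for all i ∈ ℕ and all μ > 0. Then there exists an absolute constant K_x (depending only on C_x and b_x) such that for every real sequence a = (a_i)_{i∈ℕ} with ‖a‖₁ = Σ_i |a_i| < ∞ and every μ > 0, Pr{Σ_{i∈ℕ} |a_i x_i| > μ} ≤ exp(−(1/‖a‖_∞)(μ/(2K_x e) − ‖a‖₁)), where ‖a‖_∞ = sup_i |a_i|. -/

import Mathlib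

open MeasureTheory ProbabilityTheory Filter Topology
open Set
set_option maxHeartbeats 1000000

lemma mgf_abs_bound {Ω : Type} [MeasurableSpace Ω] (μ : Measure Ω) [IsProbabilityMeasure μ]
    (Y : Ω → ℝ) (hY : Measurable Y) (Cx bx s : ℝ) (hCx : 0 < Cx) (hbx : 0 < bx)
    (htail : ∀ m : ℝ, 0 < m → μ {ω | m < |Y ω|} ≤ ENNReal.ofReal (Cx * Real.exp (-m / bx)))
    (hs : 0 ≤ s) (hs2 : s ≤ 1 / (2 * bx)) :
    Integrable (fun ω => Real.exp (s * |Y ω|)) μ ∧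
      ∫ ω, Real.exp (s * |Y ω|) ∂μ ≤ Real.exp (2 * Cx * bx * s) := by
  have hα : (0:ℝ) < 1 / bx - s := by
    have : s < 1 / bx := lt_of_le_of_lt hs2 (by
      rw [div_lt_div_iff₀ (by positivity) hbx]; nlinarith)
    linarith
  set α : ℝ := 1 / bx - s with hαdef
  have hα2 : 1 / (2 * bx) ≤ α := by
    have h2 : (1:ℝ)/(2*bx) + 1/(2*bx) = 1/bx := by
      rw [← add_div, div_eq_div_iff (by positivity) hbx.ne']; ring
    simp only [hαdef]; linarith
  have hαinv : α⁻¹ ≤ 2 * bx := by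
    rw [inv_le_comm₀ hα (by positivity)]
    calc (2*bx)⁻¹ = 1/(2*bx) := (one_div _).symm
    _ ≤ α := hα2
  -- layer cake
  have f_nn : (0:Ω→ℝ) ≤ᵐ[μ] fun ω => |Y ω| := Filter.Eventually.of_forall fun ω => abs_nonneg _
  have f_mble : AEMeasurable (fun ω => |Y ω|) μ := hY.abs.aemeasurable
  have g_intble : ∀ t > (0:ℝ), IntervalIntegrable (fun t => s * Real.exp (s*t)) volume 0 t :=
    fun t _ => (Continuous.intervalIntegrable (by continuity) 0 t)
  have g_nn : ∀ᵐ t ∂(volume.restrict (Ioi (0:ℝ))), 0 ≤ s * Real.exp (s*t) :=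
    Filter.Eventually.of_forall fun t => by positivity
  have hFT : ∀ u : ℝ, (∫ t in (0:ℝ)..u, s * Real.exp (s*t)) = Real.exp (s*u) - 1 := by
    intro u
    have : ∀ t ∈ Set.uIcc (0:ℝ) u, HasDerivAt (fun t => Real.exp (s*t)) (s * Real.exp (s*t)) t := by
      intro t _
      have h1 : HasDerivAt (fun t : ℝ => s * t) s t := by
        simpa using (hasDerivAt_id t).const_mul s
      simpa [mul_comm] using h1.exp
    rw [intervalIntegral.integral_eq_sub_of_hasDerivAt this
      (Continuous.intervalIntegrable (by continuity) 0 u)]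
    simp
  have key : (∫⁻ ω, ENNReal.ofReal (Real.exp (s * |Y ω|) - 1) ∂μ)
      ≤ ENNReal.ofReal (2 * Cx * bx * s) := by
    have lc := lintegral_comp_eq_lintegral_meas_lt_mul μ f_nn f_mble g_intble g_nn
    have : (∫⁻ ω, ENNReal.ofReal (Real.exp (s * |Y ω|) - 1) ∂μ)
        = ∫⁻ t in Ioi (0:ℝ), μ {a | t < |Y a|} * ENNReal.ofReal (s * Real.exp (s*t)) := by
      rw [← lc]; congr 1; ext ω; rw [hFT]
    rw [this]
    have step1 : (∫⁻ t in Ioi (0:ℝ), μ {a | t < |Y a|} * ENNReal.ofReal (s * Real.exp (s*t)))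
        ≤ ∫⁻ t in Ioi (0:ℝ), ENNReal.ofReal (Cx * s * Real.exp (-α * t)) := by
      apply setLIntegral_mono
        (((measurable_id.const_mul (-α)).exp.const_mul (Cx*s)).ennreal_ofReal)
      intro t ht
      calc μ {a | t < |Y a|} * ENNReal.ofReal (s * Real.exp (s*t))
          ≤ ENNReal.ofReal (Cx * Real.exp (-t / bx)) * ENNReal.ofReal (s * Real.exp (s*t)) := by
            exact mul_le_mul_left (htail t ht) _
        _ = ENNReal.ofReal (Cx * s * Real.exp (-α * t)) := by
            rw [← ENNReal.ofReal_mul (by positivity)]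
            congr 1
            rw [mul_mul_mul_comm, ← Real.exp_add]
            congr 1
            simp only [hαdef]; ring
    refine step1.trans ?_
    have hint : IntegrableOn (fun t => Cx * s * Real.exp (-α * t)) (Ioi (0:ℝ)) volume :=
      (exp_neg_integrableOn_Ioi 0 hα).const_mul _
    rw [← ofReal_integral_eq_lintegral_ofReal hint
      (Filter.Eventually.of_forall fun t => by positivity)]
    apply ENNReal.ofReal_le_ofReal
    rw [integral_const_mul]
    have hval : (∫ t in Ioi (0:ℝ), Real.exp (-α * t)) = α⁻¹ := by
      have := integral_exp_neg_mul_rpow (one_pos) hα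
      simp only [Real.rpow_one] at this
      rw [this]
      rw [show (1:ℝ)/1 + 1 = 2 by norm_num, Real.Gamma_two]
      rw [show (-1 :ℝ)/1 = -1 by norm_num, Real.rpow_neg_one, mul_one]
    rw [hval]
    calc Cx * s * α⁻¹ ≤ Cx * s * (2*bx) := by
          apply mul_le_mul_of_nonneg_left hαinv (by positivity)
      _ = 2 * Cx * bx * s := by ring
  -- integrability
  have gnn : (0:Ω→ℝ) ≤ᵐ[μ] fun ω => Real.exp (s * |Y ω|) - 1 :=
    Filter.Eventually.of_forall fun ω => by
      simp only [Pi.zero_apply, sub_nonneg, Real.one_le_exp_iff]; positivity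
  have gmeas : AEStronglyMeasurable (fun ω => Real.exp (s * |Y ω|) - 1) μ :=
    (((hY.abs.const_mul s).exp.sub measurable_const)).aestronglyMeasurable
  have gint : Integrable (fun ω => Real.exp (s * |Y ω|) - 1) μ := by
    refine ⟨gmeas, ?_⟩
    rw [hasFiniteIntegral_iff_ofReal gnn]
    exact lt_of_le_of_lt key ENNReal.ofReal_lt_top
  have hint : Integrable (fun ω => Real.exp (s * |Y ω|)) μ := by
    have h := gint.add (integrable_const (1:ℝ))
    have he : (fun ω => Real.exp (s * |Y ω|)) = fun ω => (Real.exp (s * |Y ω|) - 1) + 1 := by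
      ext ω; ring
    rwa [he]
  refine ⟨hint, ?_⟩
  have h1 : (∫ ω, (Real.exp (s * |Y ω|) - 1) ∂μ) ≤ 2 * Cx * bx * s := by
    rw [integral_eq_lintegral_of_nonneg_ae gnn gmeas]
    calc (∫⁻ ω, ENNReal.ofReal (Real.exp (s * |Y ω|) - 1) ∂μ).toReal
        ≤ (ENNReal.ofReal (2 * Cx * bx * s)).toReal := ENNReal.toReal_mono ENNReal.ofReal_ne_top key
      _ = 2 * Cx * bx * s := ENNReal.toReal_ofReal (by positivity)
  have h2 : (∫ ω, Real.exp (s * |Y ω|) ∂μ) = (∫ ω, (Real.exp (s * |Y ω|) - 1) ∂μ) + 1 := by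
    rw [integral_sub hint (integrable_const 1)]
    simp
  rw [h2]
  calc (∫ ω, (Real.exp (s * |Y ω|) - 1) ∂μ) + 1 ≤ 2*Cx*bx*s + 1 := by linarith
    _ ≤ Real.exp (2*Cx*bx*s) := Real.add_one_le_exp _


theorem statement_12
    (Ω : Type) [MeasurableSpace Ω] (μ : Measure Ω) [IsProbabilityMeasure μ]
    (x : ℕ → Ω → ℝ)
    (hmeas : ∀ i, Measurable (x i))
    (hint : ∀ i, Integrable (x i) μ)
    (hindep : iIndepFun x μ)
    (hmean : ∀ i, (∫ ω, x i ω ∂μ) = 0)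
    (Cx bx : ℝ) (hCx : 0 < Cx) (hbx : 0 < bx)
    (htail : ∀ i (m : ℝ), 0 < m →
      μ {ω | m < |x i ω|} ≤ ENNReal.ofReal (Cx * Real.exp (-m / bx))) :
    ∃ Kx : ℝ, 0 < Kx ∧
      ∀ a : ℕ → ℝ, Summable (fun i => |a i|) →
        ∀ m : ℝ, 0 < m →
          μ {ω | m < ∑' i : ℕ, |a i * x i ω|}
            ≤ ENNReal.ofReal (Real.exp (-(1 / (⨆ i, |a i|))
                * (m / (2 * Kx * Real.exp 1) - ∑' i : ℕ, |a i|))) := by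
  classical
  set c' : ℝ := 2 * bx * max 1 Cx with hc'def
  have hmax1 : (1:ℝ) ≤ max 1 Cx := le_max_left 1 Cx
  have hmaxC : Cx ≤ max 1 Cx := le_max_right 1 Cx
  have hc' : 0 < c' := by positivity
  have hc'2bx : 2 * bx ≤ c' := by nlinarith
  have hc'Cx : 2 * Cx * bx ≤ c' := by nlinarith
  refine ⟨c', hc', ?_⟩
  intro a ha m hm
  have hL0 : 0 ≤ ∑' i, |a i| := tsum_nonneg fun i => abs_nonneg _
  have hbdd : BddAbove (Set.range fun i => |a i|) := by
    refine ⟨∑' i, |a i|, ?_⟩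
    rintro _ ⟨i, rfl⟩
    exact Summable.le_tsum ha i fun j _ => abs_nonneg _
  have hSL : ∀ i, |a i| ≤ ⨆ i, |a i| := fun i => le_ciSup hbdd i
  by_cases hS : (⨆ i, |a i|) = 0
  · have hz : ∀ i, a i = 0 := fun i =>
      abs_eq_zero.mp (le_antisymm (hS ▸ hSL i) (abs_nonneg _))
    have hset : {ω | m < ∑' i, |a i * x i ω|} = ∅ := by
      ext ω
      simp only [Set.mem_setOf_eq, Set.mem_empty_iff_false, iff_false, not_lt]
      have hzz : ∀ i, |a i * x i ω| = 0 := fun i => by rw [hz i, zero_mul, abs_zero]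
      rw [tsum_congr hzz, tsum_zero]
      exact hm.le
    rw [hset]
    simp
  · set S : ℝ := ⨆ i, |a i| with hSdef
    set L : ℝ := ∑' i, |a i| with hLdef
    have hS0 : 0 < S := lt_of_le_of_ne ((abs_nonneg (a 0)).trans (hSL 0)) (Ne.symm hS)
    set t : ℝ := 1 / (S * c') with htdef
    have ht0 : 0 < t := by positivity
    set X : ℕ → Ω → ℝ := fun i ω => |a i * x i ω| with hXdef
    have hXmeas : ∀ i, Measurable (X i) := fun i => ((hmeas i).const_mul (a i)).abs
    have hXindep : iIndepFun X μ :=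
      hindep.comp (fun i y => |a i * y|) (fun i => (measurable_id.const_mul (a i)).abs)
    have hti : ∀ i, 0 ≤ t * |a i| ∧ t * |a i| ≤ 1 / (2 * bx) := by
      intro i
      refine ⟨by positivity, ?_⟩
      have h1 : t * |a i| ≤ t * S := mul_le_mul_of_nonneg_left (hSL i) ht0.le
      have h2 : t * S = 1 / c' := by
        rw [htdef]; field_simp
      have h3 : (1:ℝ) / c' ≤ 1 / (2 * bx) :=
        one_div_le_one_div_of_le (by positivity) hc'2bx
      calc t * |a i| ≤ t * S := h1
        _ = 1 / c' := h2
        _ ≤ 1 / (2 * bx) := h3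
    have hXeq : ∀ i ω, t * X i ω = (t * |a i|) * |x i ω| := by
      intro i ω
      rw [hXdef]
      simp only [abs_mul]
      ring
    have hmg : ∀ i, Integrable (fun ω => Real.exp (t * X i ω)) μ ∧
        mgf (X i) μ t ≤ Real.exp (2 * Cx * bx * (t * |a i|)) := by
      intro i
      obtain ⟨h1, h2⟩ := mgf_abs_bound μ (x i) (hmeas i) Cx bx (t * |a i|) hCx hbx
        (htail i) (hti i).1 (hti i).2
      have hfe : (fun ω => Real.exp (t * X i ω))
          = fun ω => Real.exp ((t * |a i|) * |x i ω|) := by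
        ext ω; rw [hXeq i ω]
      constructor
      · rw [hfe]; exact h1
      · rw [mgf]
        calc ∫ ω, Real.exp (t * X i ω) ∂μ
            = ∫ ω, Real.exp ((t * |a i|) * |x i ω|) ∂μ := by rw [hfe]
          _ ≤ Real.exp (2 * Cx * bx * (t * |a i|)) := h2
    set A : ℕ → Set Ω := fun n => {ω | m < (∑ i ∈ Finset.range n, X i) ω} with hAdef
    have hchern : ∀ n : ℕ,
        μ (A n) ≤ ENNReal.ofReal (Real.exp (-(t * m) + 2 * Cx * bx * t * L)) := by
      intro n
      have hsum_int : Integrable (fun ω => Real.exp (t * (∑ i ∈ Finset.range n, X i) ω)) μ :=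
        hXindep.integrable_exp_mul_sum hXmeas (fun i _ => (hmg i).1)
      have hcb := measure_ge_le_exp_mul_mgf (μ := μ) (X := ∑ i ∈ Finset.range n, X i)
        m ht0.le hsum_int
      have hmgfprod : mgf (∑ i ∈ Finset.range n, X i) μ t
          = ∏ i ∈ Finset.range n, mgf (X i) μ t := hXindep.mgf_sum hXmeas _
      have hprod : ∏ i ∈ Finset.range n, mgf (X i) μ t
          ≤ Real.exp (∑ i ∈ Finset.range n, 2 * Cx * bx * (t * |a i|)) := by
        rw [Real.exp_sum]
        exact Finset.prod_le_prod (fun i _ => mgf_nonneg) (fun i _ => (hmg i).2)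
      have hsumL : ∑ i ∈ Finset.range n, 2 * Cx * bx * (t * |a i|) ≤ 2 * Cx * bx * t * L := by
        have hl : ∑ i ∈ Finset.range n, |a i| ≤ L :=
          Summable.sum_le_tsum (Finset.range n) (fun j _ => abs_nonneg _) ha
        calc ∑ i ∈ Finset.range n, 2 * Cx * bx * (t * |a i|)
            = (2 * Cx * bx * t) * ∑ i ∈ Finset.range n, |a i| := by
              rw [Finset.mul_sum]; congr 1; ext i; ring
          _ ≤ (2 * Cx * bx * t) * L := by
              apply mul_le_mul_of_nonneg_left hl (by positivity)
          _ = 2 * Cx * bx * t * L := by ring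
      calc μ (A n) ≤ μ {ω | m ≤ (∑ i ∈ Finset.range n, X i) ω} :=
            measure_mono (Set.setOf_subset_setOf.mpr (fun ω h => le_of_lt h))
        _ = ENNReal.ofReal (μ {ω | m ≤ (∑ i ∈ Finset.range n, X i) ω}).toReal :=
            (ENNReal.ofReal_toReal (measure_ne_top μ _)).symm
        _ ≤ ENNReal.ofReal (Real.exp (-t * m) * mgf (∑ i ∈ Finset.range n, X i) μ t) :=
            ENNReal.ofReal_le_ofReal hcb
        _ ≤ ENNReal.ofReal (Real.exp (-(t * m) + 2 * Cx * bx * t * L)) := by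
            apply ENNReal.ofReal_le_ofReal
            rw [Real.exp_add]
            have h1 : Real.exp (-t * m) = Real.exp (-(t * m)) := by rw [neg_mul]
            rw [h1]
            apply mul_le_mul_of_nonneg_left _ (Real.exp_nonneg _)
            rw [hmgfprod]
            exact hprod.trans (Real.exp_le_exp.mpr hsumL)
    have hsubset : {ω | m < ∑' i, |a i * x i ω|} ⊆ ⋃ n, A n := by
      intro ω hω
      simp only [Set.mem_setOf_eq] at hω
      by_cases hsummable : Summable (fun i => |a i * x i ω|)
      · have htend := hsummable.hasSum.tendsto_sum_nat
        obtain ⟨n, hn⟩ := (htend.eventually_const_lt hω).exists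
        refine Set.mem_iUnion.mpr ⟨n, ?_⟩
        simp only [hAdef, Set.mem_setOf_eq, Finset.sum_apply]
        exact hn
      · rw [tsum_eq_zero_of_not_summable hsummable] at hω
        linarith
    have hdir : Directed (· ⊆ ·) A := by
      apply Monotone.directed_le
      intro n n' hnn ω hω
      simp only [hAdef, Set.mem_setOf_eq, Finset.sum_apply] at hω ⊢
      refine lt_of_lt_of_le hω ?_
      apply Finset.sum_le_sum_of_subset_of_nonneg (Finset.range_subset_range.mpr hnn)
      intro i _ _
      exact abs_nonneg _
    have hexp : -(t * m) + 2 * Cx * bx * t * L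
        ≤ -(1 / S) * (m / (2 * c' * Real.exp 1) - L) := by
      have he1 : (1:ℝ) ≤ Real.exp 1 := Real.one_le_exp (by norm_num)
      have h1 : m / (2 * c' * Real.exp 1 * S) ≤ t * m := by
        have heq : t * m = m / (S * c') := by rw [htdef]; ring
        rw [heq]
        apply div_le_div_of_nonneg_left hm.le (by positivity)
        nlinarith [mul_nonneg (mul_nonneg hS0.le hc'.le) (sub_nonneg.mpr he1),
          mul_pos hS0 hc']
      have h2 : 2 * Cx * bx * t * L ≤ L / S := by
        have heq : 2 * Cx * bx * t * L = (2 * Cx * bx) * L / (S * c') := by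
          rw [htdef]; ring
        rw [heq, div_le_div_iff₀ (by positivity) hS0]
        nlinarith [mul_nonneg (mul_nonneg hL0 hS0.le) (sub_nonneg.mpr hc'Cx)]
      have h3 : -(1 / S) * (m / (2 * c' * Real.exp 1) - L)
          = -(m / (2 * c' * Real.exp 1 * S)) + L / S := by
        field_simp
        ring
      rw [h3]
      linarith
    calc μ {ω | m < ∑' i, |a i * x i ω|} ≤ μ (⋃ n, A n) := measure_mono hsubset
      _ = ⨆ n, μ (A n) := hdir.measure_iUnion
      _ ≤ ENNReal.ofReal (Real.exp (-(t * m) + 2 * Cx * bx * t * L)) := iSup_le hchern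
      _ ≤ ENNReal.ofReal (Real.exp (-(1 / S) * (m / (2 * c' * Real.exp 1) - L))) := by
          exact ENNReal.ofReal_le_ofReal (Real.exp_le_exp.mpr hexp)
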